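/- Let p, q be relatively prime positive integers, let S²_{p,q} = S³_{p,q}/S¹ be the orbit space of the S¹-action e^{2πiθ}·(z,w) = (e^{2πipθ}z, e^{2πiqθ}w) with the quotient topology, and let U_S = {[z:w] ∈ S²_{p,q} : w ≠ 0}. The group Γ_{1/q} = {e^{2πik/q} : k ∈ ℤ} acts on B(q) = {z ∈ ℂ : |z|² < q} by complex multiplication, and the map B(q)/Γ_{1/q} → U_S sending the class [z] to the orbit [z : √(p − (p/q)|z|²)] is well defined and is a homeomorphism, where B(q)/Γ_{1/q} carries the quotient topology and U_S the subspace topology. -/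

import Mathlib

open Complex

/-- `expc x = e^{2πix}`. -/
noncomputable def expc (x : ℝ) : ℂ := Complex.exp (2 * Real.pi * Complex.I * x)

/-- The ellipsoid `S³_{p,q} = {(z,w) ∈ ℂ² : p|z|² + q|w|² = pq}`. -/
def ellipsoid (p q : ℕ) : Set (ℂ × ℂ) :=
  {z | (p : ℝ) * ‖z.1‖ ^ 2 + (q : ℝ) * ‖z.2‖ ^ 2 = (p : ℝ) * (q : ℝ)}

/-- Orbit relation of the `S¹`-action `e^{2πiθ}·(z,w) = (e^{2πipθ}z, e^{2πiqθ}w)` on the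
ellipsoid `S³_{p,q}`. -/
noncomputable def orbitRel (p q : ℕ) (x y : ellipsoid p q) : Prop :=
  ∃ θ : ℝ, (y : ℂ × ℂ) =
    (expc ((p : ℝ) * θ) * (x : ℂ × ℂ).1, expc ((q : ℝ) * θ) * (x : ℂ × ℂ).2)

/-- The ball `B(q) = {z ∈ ℂ : |z|² < q}`. -/
def ball' (q : ℕ) : Set ℂ := {z | ‖z‖ ^ 2 < (q : ℝ)}

/-- Orbit relation of the action of `Γ_{1/q} = {e^{2πik/q} : k ∈ ℤ}` on `B(q)` by complex
multiplication. -/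
noncomputable def ballRel (q : ℕ) (x y : ball' q) : Prop :=
  ∃ k : ℤ, (y : ℂ) = expc ((k : ℝ) / (q : ℝ)) * (x : ℂ)

/-- `U_S = {[z:w] ∈ S²_{p,q} : w ≠ 0}`. -/
noncomputable def US (p q : ℕ) : Set (Quot (orbitRel p q)) :=
  {o | ∃ x : ellipsoid p q, Quot.mk (orbitRel p q) x = o ∧ (x : ℂ × ℂ).2 ≠ 0}

/- ### expc lemmas -/
lemma expc_add (a b : ℝ) : expc (a + b) = expc a * expc b := by
  simp [expc, ← Complex.exp_add]; ring_nf

lemma expc_zero : expc 0 = 1 := by simp [expc]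

lemma expc_int (n : ℤ) : expc n = 1 := by
  rw [expc, show 2 * Real.pi * Complex.I * (n:ℝ) = (n:ℤ) * (2 * Real.pi * Complex.I) by push_cast; ring]
  exact Complex.exp_int_mul_two_pi_mul_I n

lemma abs_expc (x : ℝ) : ‖expc x‖ = 1 := by
  rw [expc, Complex.norm_exp]
  simp [Complex.mul_re, Complex.mul_im]

lemma expc_ne_zero (x : ℝ) : expc x ≠ 0 := Complex.exp_ne_zero _

lemma expc_neg (x : ℝ) : expc (-x) = (expc x)⁻¹ := by
  rw [expc, expc, ← Complex.exp_neg]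
  congr 1
  push_cast
  ring

lemma conj_expc (x : ℝ) : (starRingEnd ℂ) (expc x) = expc (-x) := by
  rw [expc, expc, ← Complex.exp_conj]
  congr 1
  rw [map_mul, map_mul, map_mul, Complex.conj_I]
  rw [show ((2:ℂ)) = ((2:ℝ):ℂ) by norm_num, Complex.conj_ofReal, Complex.conj_ofReal, Complex.conj_ofReal]
  push_cast
  ring

lemma expc_nsmul (x : ℝ) (n : ℕ) : expc x ^ n = expc (n * x) := by
  induction n with
  | zero => simp [expc_zero]
  | succ n ih => rw [pow_succ, ih, ← expc_add]; congr 1; push_cast; ring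

lemma expc_eq_one_iff (x : ℝ) : expc x = 1 ↔ ∃ n : ℤ, x = n := by
  constructor
  · intro h
    rw [expc, Complex.exp_eq_one_iff] at h
    obtain ⟨n, hn⟩ := h
    refine ⟨n, ?_⟩
    have : (x : ℂ) = n := by
      have h2 : (2 * (Real.pi:ℂ) * Complex.I) ≠ 0 := by
        simp [Complex.I_ne_zero, Real.pi_ne_zero]
      have h3 : (x:ℂ) * (2 * (Real.pi:ℂ) * Complex.I) = (n:ℂ) * (2 * (Real.pi:ℂ) * Complex.I) := by
        linear_combination hn
      exact mul_right_cancel₀ h2 h3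
    exact_mod_cast this
  · rintro ⟨n, rfl⟩; exact expc_int n
lemma expc_neg_mul_cancel (x : ℝ) (z : ℂ) : expc (-x) * (expc x * z) = z := by
  rw [← mul_assoc, ← expc_add]; simp [expc_zero]

lemma abs_expc_mul (x : ℝ) (z : ℂ) : ‖expc x * z‖ = ‖z‖ := by
  rw [norm_mul, abs_expc, one_mul]

/- ### the square-root function -/
noncomputable def sfun (p q : ℕ) (z : ℂ) : ℝ :=
  Real.sqrt ((p : ℝ) - (p : ℝ) / (q : ℝ) * ‖z‖ ^ 2)

lemma sfun_sq_pos {p q : ℕ} (hp : 0 < p) (hq : 0 < q) {z : ℂ}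
    (hz : ‖z‖ ^ 2 < (q : ℝ)) :
    0 < (p : ℝ) - (p : ℝ) / (q : ℝ) * ‖z‖ ^ 2 := by
  have hq' : (0:ℝ) < q := by exact_mod_cast hq
  have hp' : (0:ℝ) < p := by exact_mod_cast hp
  have h1 : (p : ℝ) / (q : ℝ) * ‖z‖ ^ 2 < (p : ℝ) / (q : ℝ) * q :=
    mul_lt_mul_of_pos_left hz (div_pos hp' hq')
  rw [div_mul_cancel₀ _ hq'.ne'] at h1
  linarith

lemma sfun_pos {p q : ℕ} (hp : 0 < p) (hq : 0 < q) {z : ℂ}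
    (hz : ‖z‖ ^ 2 < (q : ℝ)) : 0 < sfun p q z :=
  Real.sqrt_pos.mpr (sfun_sq_pos hp hq hz)

lemma sfun_sq {p q : ℕ} (hp : 0 < p) (hq : 0 < q) {z : ℂ}
    (hz : ‖z‖ ^ 2 < (q : ℝ)) :
    sfun p q z ^ 2 = (p : ℝ) - (p : ℝ) / (q : ℝ) * ‖z‖ ^ 2 :=
  Real.sq_sqrt (sfun_sq_pos hp hq hz).le

lemma f_mem {p q : ℕ} (hp : 0 < p) (hq : 0 < q) {z : ℂ}
    (hz : ‖z‖ ^ 2 < (q : ℝ)) :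
    ((z, ((sfun p q z : ℝ) : ℂ)) : ℂ × ℂ) ∈ ellipsoid p q := by
  have hq' : (0:ℝ) < q := by exact_mod_cast hq
  simp only [ellipsoid, Set.mem_setOf_eq, Complex.norm_real, Real.norm_eq_abs, _root_.sq_abs]
  rw [sfun_sq hp hq hz]
  field_simp
  ring

noncomputable def fmap (p q : ℕ) (hp : 0 < p) (hq : 0 < q) (z : ball' q) : ellipsoid p q :=
  ⟨((z : ℂ), ((sfun p q (z : ℂ) : ℝ) : ℂ)), f_mem hp hq z.2⟩

/- ### relations are equivalences -/
lemma ballRel_equivalence (q : ℕ) (hq : 0 < q) : Equivalence (ballRel q) := by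
  constructor
  · intro x
    exact ⟨0, by norm_num [expc_zero]⟩
  · rintro x y ⟨k, hk⟩
    refine ⟨-k, ?_⟩
    rw [hk]
    push_cast
    rw [neg_div, expc_neg_mul_cancel]
  · rintro x y z ⟨k, hk⟩ ⟨l, hl⟩
    refine ⟨l + k, ?_⟩
    rw [hl, hk]
    push_cast
    rw [add_div, expc_add, mul_assoc]
lemma orbitRel_equivalence (p q : ℕ) : Equivalence (orbitRel p q) := by
  constructor
  · intro x
    exact ⟨0, by simp [expc_zero]⟩
  · rintro x y ⟨θ, hθ⟩
    refine ⟨-θ, ?_⟩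
    rw [hθ]
    simp only [mul_neg]
    rw [expc_neg_mul_cancel, expc_neg_mul_cancel]
  · rintro x y z ⟨θ, hθ⟩ ⟨θ', hθ'⟩
    refine ⟨θ + θ', ?_⟩
    rw [hθ', hθ]
    simp only [mul_add, expc_add, Prod.mk.injEq]
    constructor <;> ring

lemma ballRel_of_mk_eq {q : ℕ} (hq : 0 < q) {x y : ball' q}
    (h : Quot.mk (ballRel q) x = Quot.mk (ballRel q) y) : ballRel q x y :=
  ((ballRel_equivalence q hq).eqvGen_iff).mp (Quot.eqvGen_exact h)

lemma orbitRel_of_mk_eq {p q : ℕ} {x y : ellipsoid p q}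
    (h : Quot.mk (orbitRel p q) x = Quot.mk (orbitRel p q) y) : orbitRel p q x y :=
  ((orbitRel_equivalence p q).eqvGen_iff).mp (Quot.eqvGen_exact h)

/- ### well-definedness -/
lemma fmap_sound {p q : ℕ} (hp : 0 < p) (hq : 0 < q) (hpq : Nat.Coprime p q)
    {x y : ball' q} (h : ballRel q x y) :
    Quot.mk (orbitRel p q) (fmap p q hp hq x) = Quot.mk (orbitRel p q) (fmap p q hp hq y) := by
  have hq' : (0:ℝ) < q := by exact_mod_cast hq
  obtain ⟨k, hk⟩ := h
  obtain ⟨u, v, huv⟩ := Nat.isCoprime_iff_coprime.mpr hpq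
  -- p * (k*u) = k + q * (-(k*v))
  have hbez : (p : ℤ) * (k * u) = k + q * (-(k * v)) := by linear_combination k * huv
  apply Quot.sound
  refine ⟨((k * u : ℤ) : ℝ) / q, ?_⟩
  have habs : ‖(y : ℂ)‖ = ‖(x : ℂ)‖ := by rw [hk, abs_expc_mul]
  have hfst : expc ((p : ℝ) * (((k * u : ℤ) : ℝ) / q)) = expc ((k : ℝ) / q) := by
    have harg : (p : ℝ) * (((k * u : ℤ) : ℝ) / q) = (k : ℝ) / q + ((-(k * v) : ℤ) : ℝ) := by
      have h2 : ((p:ℝ)) * ((k:ℝ) * (u:ℝ)) = (k:ℝ) + (q:ℝ) * (-((k:ℝ) * (v:ℝ))) := by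
        exact_mod_cast hbez
      push_cast
      field_simp
      linear_combination h2
    rw [harg, expc_add, expc_int, mul_one]
  have hsnd : expc ((q : ℝ) * (((k * u : ℤ) : ℝ) / q)) = 1 := by
    rw [mul_div_cancel₀ _ hq'.ne']
    exact expc_int _
  show (fmap p q hp hq y : ℂ × ℂ) = _
  simp only [fmap]
  rw [hfst, hsnd, one_mul]
  refine Prod.ext ?_ ?_
  · exact hk
  · show ((sfun p q (y : ℂ) : ℝ) : ℂ) = ((sfun p q (x : ℂ) : ℝ) : ℂ)
    rw [sfun, sfun, habs]

/- ### injectivity core -/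
lemma fmap_inj {p q : ℕ} (hp : 0 < p) (hq : 0 < q) {x y : ball' q}
    (h : orbitRel p q (fmap p q hp hq x) (fmap p q hp hq y)) : ballRel q x y := by
  have hq' : (0:ℝ) < q := by exact_mod_cast hq
  obtain ⟨θ, hθ⟩ := h
  have hfst : (y : ℂ) = expc ((p : ℝ) * θ) * (x : ℂ) := congrArg Prod.fst hθ
  have hsnd : ((sfun p q (y : ℂ) : ℝ) : ℂ) = expc ((q : ℝ) * θ) * ((sfun p q (x : ℂ) : ℝ) : ℂ) :=
    congrArg Prod.snd hθ
  have hsx : 0 < sfun p q (x : ℂ) := sfun_pos hp hq x.2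
  have hsy : 0 < sfun p q (y : ℂ) := sfun_pos hp hq y.2
  have habs : sfun p q (y : ℂ) = sfun p q (x : ℂ) := by
    have := congrArg norm hsnd
    rwa [abs_expc_mul, Complex.norm_real, Real.norm_eq_abs, Complex.norm_real, Real.norm_eq_abs, abs_of_pos hsy,
      abs_of_pos hsx] at this
  have hone : expc ((q : ℝ) * θ) = 1 := by
    have hx0 : ((sfun p q (x : ℂ) : ℝ) : ℂ) ≠ 0 := Complex.ofReal_ne_zero.mpr hsx.ne'
    apply mul_right_cancel₀ hx0
    rw [one_mul, ← hsnd, habs]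
  obtain ⟨n, hn⟩ := (expc_eq_one_iff _).mp hone
  refine ⟨p * n, ?_⟩
  rw [hfst]
  congr 1
  congr 1
  have hθval : θ = (n : ℝ) / q := by
    field_simp
    linarith [hn]
  rw [hθval]
  push_cast
  ring

/- ### surjectivity core -/
lemma fmap_surj {p q : ℕ} (hp : 0 < p) (hq : 0 < q) (x : ellipsoid p q)
    (hx : (x : ℂ × ℂ).2 ≠ 0) :
    ∃ z : ball' q, Quot.mk (orbitRel p q) (fmap p q hp hq z) = Quot.mk (orbitRel p q) x := by
  have hq' : (0:ℝ) < q := by exact_mod_cast hq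
  have hp' : (0:ℝ) < p := by exact_mod_cast hp
  set z := (x : ℂ × ℂ).1 with hzdef
  set w := (x : ℂ × ℂ).2 with hwdef
  have he : (p : ℝ) * ‖z‖ ^ 2 + (q : ℝ) * ‖w‖ ^ 2 = (p : ℝ) * q := x.2
  have hw0 : 0 < ‖w‖ := norm_pos_iff.mpr hx
  have hzq : ‖z‖ ^ 2 < (q : ℝ) := by nlinarith [mul_pos hq' (pow_pos hw0 2)]
  have hw2 : ‖w‖ ^ 2 = (p : ℝ) - (p : ℝ) / q * ‖z‖ ^ 2 := by
    field_simp
    linarith [he]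
  set θ : ℝ := -(Complex.arg w / (2 * Real.pi * q)) with hθdef
  have hqθ : expc ((q : ℝ) * θ) = Complex.exp (-(Complex.arg w) * Complex.I) := by
    rw [expc]
    congr 1
    have hπ : (Real.pi : ℂ) ≠ 0 := Complex.ofReal_ne_zero.mpr Real.pi_ne_zero
    have hqC : (q : ℂ) ≠ 0 := Nat.cast_ne_zero.mpr hq.ne'
    rw [hθdef]
    push_cast
    field_simp
  have hqθw : expc ((q : ℝ) * θ) * w = ((‖w‖ : ℝ) : ℂ) := by
    rw [hqθ]
    conv_lhs => rw [← Complex.norm_mul_exp_arg_mul_I w]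
    rw [← mul_assoc, mul_comm (Complex.exp _), mul_assoc, ← Complex.exp_add]
    simp
  set z' := expc ((p : ℝ) * θ) * z with hz'def
  have hz'abs : ‖z'‖ = ‖z‖ := abs_expc_mul _ _
  have hz'mem : z' ∈ ball' q := by simpa only [ball', Set.mem_setOf_eq, hz'abs] using hzq
  have hsfun : sfun p q z' = ‖w‖ := by
    rw [sfun, hz'abs, ← hw2, Real.sqrt_sq hw0.le]
  refine ⟨⟨z', hz'mem⟩, ?_⟩
  refine (Quot.sound ⟨θ, ?_⟩).symm
  show (fmap p q hp hq ⟨z', hz'mem⟩ : ℂ × ℂ) = _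
  simp only [fmap]
  refine Prod.ext rfl ?_
  show ((sfun p q z' : ℝ) : ℂ) = expc ((q : ℝ) * θ) * w
  rw [hsfun, hqθw]

/- ### the invariant function -/
noncomputable def invA (p q : ℕ) (x : ℂ × ℂ) : ℂ :=
  x.1 ^ q * ((starRingEnd ℂ) x.2) ^ p / ((‖x.2‖ : ℝ) : ℂ) ^ p

lemma invA_invariant {p q : ℕ} {x y : ellipsoid p q} (h : orbitRel p q x y) :
    invA p q (y : ℂ × ℂ) = invA p q (x : ℂ × ℂ) := by
  obtain ⟨θ, hθ⟩ := h
  have h1 : (y : ℂ × ℂ).1 = expc ((p : ℝ) * θ) * (x : ℂ × ℂ).1 := congrArg Prod.fst hθ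
  have h2 : (y : ℂ × ℂ).2 = expc ((q : ℝ) * θ) * (x : ℂ × ℂ).2 := congrArg Prod.snd hθ
  simp only [invA, h1, h2, abs_expc_mul, norm_mul, mul_pow, map_mul, conj_expc, expc_nsmul, abs_expc,
    map_mul, Complex.ofReal_one, one_pow, one_mul]
  rw [show (q : ℝ) * ((p : ℝ) * θ) = (p : ℝ) * (q : ℝ) * θ by ring,
    show (p : ℝ) * -((q : ℝ) * θ) = -((p : ℝ) * (q : ℝ) * θ) by ring, expc_neg]
  have hne := expc_ne_zero ((p : ℝ) * (q : ℝ) * θ)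
  field_simp

lemma invA_fmap {p q : ℕ} (hp : 0 < p) (hq : 0 < q) (z : ball' q) :
    invA p q ((fmap p q hp hq z : ellipsoid p q) : ℂ × ℂ) = (z : ℂ) ^ q := by
  have hs : 0 < sfun p q (z : ℂ) := sfun_pos hp hq z.2
  simp only [invA, fmap, Complex.conj_ofReal, Complex.norm_real, Real.norm_eq_abs, abs_of_pos hs]
  rw [mul_div_assoc, div_self (pow_ne_zero _ (Complex.ofReal_ne_zero.mpr hs.ne')), mul_one]

/- ### open mapping for z ↦ z^q -/
lemma isOpenMap_pow' (q : ℕ) (hq : 0 < q) {s : Set ℂ} (hs : IsOpen s) :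
    IsOpen ((fun z : ℂ => z ^ q) '' s) := by
  have ha : AnalyticOnNhd ℂ (fun z : ℂ => z ^ q) Set.univ := fun z _ => (analyticAt_id).pow q
  rcases ha.is_constant_or_isOpen isPreconnected_univ with ⟨w, hw⟩ | h
  · exfalso
    have h0 := hw 0 trivial
    have h1 := hw 1 trivial
    rw [zero_pow hq.ne'] at h0
    rw [one_pow] at h1
    exact one_ne_zero (h1.trans h0.symm)
  · exact h s (Set.subset_univ s) hs

/- ### roots of unity -/
lemma pow_eq_pow_rel (q : ℕ) (hq : 0 < q) (z y : ℂ) (h : z ^ q = y ^ q) :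
    ∃ k : ℤ, z = expc ((k : ℝ) / (q : ℝ)) * y := by
  by_cases hy : y = 0
  · refine ⟨0, ?_⟩
    subst hy
    rw [mul_zero]
    rw [zero_pow hq.ne'] at h
    exact pow_eq_zero_iff hq.ne' |>.mp h
  · have hu : (z / y) ^ q = 1 := by
      rw [div_pow, h, div_self (pow_ne_zero _ hy)]
    haveI : NeZero q := ⟨hq.ne'⟩
    obtain ⟨i, _, hzi⟩ :=
      (Complex.isPrimitiveRoot_exp q hq.ne').eq_pow_of_pow_eq_one hu
    refine ⟨(i : ℤ), ?_⟩
    have hexp : expc (((i : ℤ) : ℝ) / (q : ℝ)) =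
        Complex.exp (2 * (Real.pi : ℂ) * Complex.I / q) ^ i := by
      rw [expc, ← Complex.exp_nat_mul]
      congr 1
      push_cast
      have hqne : (q : ℂ) ≠ 0 := by exact_mod_cast (Nat.cast_ne_zero.mpr hq.ne' : (q:ℝ) ≠ 0)
      field_simp
    rw [hexp, hzi, div_mul_cancel₀ _ hy]

/- ### misc topology -/
lemma isOpen_ball' (q : ℕ) : IsOpen (ball' q) := by
  have : ball' q = (fun z : ℂ => ‖z‖ ^ 2) ⁻¹' Set.Iio (q : ℝ) := rfl
  rw [this]
  exact (continuous_norm.pow 2).isOpen_preimage _ isOpen_Iio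

lemma mk_mem_US_iff {p q : ℕ} (x : ellipsoid p q) :
    Quot.mk (orbitRel p q) x ∈ US p q ↔ (x : ℂ × ℂ).2 ≠ 0 := by
  constructor
  · rintro ⟨x', hx', hne⟩
    obtain ⟨θ, hθ⟩ := orbitRel_of_mk_eq hx'
    have h2 : (x : ℂ × ℂ).2 = expc ((q : ℝ) * θ) * (x' : ℂ × ℂ).2 := congrArg Prod.snd hθ
    rw [h2]
    exact mul_ne_zero (expc_ne_zero _) hne
  · intro h
    exact ⟨x, rfl, h⟩


/-- For `p, q` relatively prime positive integers, `Γ_{1/q}` acts on `B(q)` by complex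
multiplication, and the map `B(q)/Γ_{1/q} → U_S`, `[z] ↦ [z : √(p − (p/q)|z|²)]`, is well
defined and a homeomorphism (quotient topology on the source, subspace topology from the
quotient topology on the target). -/
theorem orbisphere_chart_S (p q : ℕ) (hp : 0 < p) (hq : 0 < q) (hpq : Nat.Coprime p q) :
    (∀ z : ℂ, z ∈ ball' q → ∀ k : ℤ, expc ((k : ℝ) / (q : ℝ)) * z ∈ ball' q) ∧
    ∃ h : Quot (ballRel q) ≃ₜ US p q,
      ∀ (z : ℂ) (hz : z ∈ ball' q) (x : ellipsoid p q),
        (x : ℂ × ℂ) =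
            (z, (Real.sqrt ((p : ℝ) - (p : ℝ) / (q : ℝ) * ‖z‖ ^ 2) : ℂ)) →
          (h (Quot.mk (ballRel q) ⟨z, hz⟩) : Quot (orbitRel p q)) =
            Quot.mk (orbitRel p q) x := by
  constructor
  · intro z hz k
    simpa only [ball', Set.mem_setOf_eq, abs_expc_mul] using hz
  -- the forward map
  have hUSmem : ∀ z : ball' q, Quot.mk (orbitRel p q) (fmap p q hp hq z) ∈ US p q := by
    intro z
    exact ⟨fmap p q hp hq z, rfl,
      Complex.ofReal_ne_zero.mpr (ne_of_gt (sfun_pos hp hq z.2))⟩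
  set F : ball' q → US p q := fun z => ⟨Quot.mk (orbitRel p q) (fmap p q hp hq z), hUSmem z⟩
    with hF
  have hFsound : ∀ x y : ball' q, ballRel q x y → F x = F y := by
    intro x y h; exact Subtype.ext (fmap_sound hp hq hpq h)
  set T : Quot (ballRel q) → US p q := Quot.lift F (hFsound) with hT
  have hTmk : ∀ z : ball' q, T (Quot.mk (ballRel q) z) = F z := fun z => rfl
  have hTbij : Function.Bijective T := by
    constructor
    · intro a b hab
      obtain ⟨x, rfl⟩ := Quot.exists_rep a
      obtain ⟨y, rfl⟩ := Quot.exists_rep b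
      rw [hTmk, hTmk] at hab
      have : Quot.mk (orbitRel p q) (fmap p q hp hq x) = Quot.mk (orbitRel p q) (fmap p q hp hq y) :=
        congrArg Subtype.val hab
      exact Quot.sound (fmap_inj hp hq (orbitRel_of_mk_eq this))
    · rintro ⟨o, x, rfl, hx2⟩
      obtain ⟨z, hz⟩ := fmap_surj hp hq x hx2
      exact ⟨Quot.mk (ballRel q) z, by rw [hTmk]; exact Subtype.ext hz⟩
  have hTcont : Continuous T := by
    apply continuous_quot_lift
    apply Continuous.subtype_mk
    apply continuous_quot_mk.comp
    apply Continuous.subtype_mk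
    apply Continuous.prodMk
    · exact continuous_subtype_val
    · exact Complex.continuous_ofReal.comp <| Real.continuous_sqrt.comp <|
        continuous_const.sub (continuous_const.mul
          ((continuous_norm.comp continuous_subtype_val).pow 2))
  set E : Quot (ballRel q) ≃ US p q := Equiv.ofBijective T hTbij with hE
  -- the invariant map on the quotient
  set Φ : Quot (orbitRel p q) → ℂ :=
    Quot.lift (fun x : ellipsoid p q => invA p q (x : ℂ × ℂ))
      (fun x y h => (invA_invariant h).symm) with hΦ
  have hΦmk : ∀ x : ellipsoid p q, Φ (Quot.mk (orbitRel p q) x) = invA p q (x : ℂ × ℂ) :=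
    fun _ => rfl
  -- continuity of the inverse
  have hEsymmCont : Continuous E.symm := by
    rw [continuous_def]
    intro U hU
    set W : Set ℂ := Subtype.val '' (Quot.mk (ballRel q) ⁻¹' U) with hW
    have hWopen : IsOpen W :=
      (isOpen_ball' q).isOpenMap_subtype_val _ (hU.preimage continuous_quot_mk)
    set V : Set ℂ := (fun z : ℂ => z ^ q) '' W with hV
    have hVopen : IsOpen V := isOpenMap_pow' q hq hWopen
    set O : Set (Quot (orbitRel p q)) := Φ ⁻¹' V ∩ US p q with hO
    have hOopen : IsOpen O := by
      rw [← isQuotientMap_quot_mk.isOpen_preimage]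
      have hpre : Quot.mk (orbitRel p q) ⁻¹' O =
          {x : ellipsoid p q | (x : ℂ × ℂ).2 ≠ 0} ∩
            (fun x : ellipsoid p q => invA p q (x : ℂ × ℂ)) ⁻¹' V := by
        ext x
        simp only [hO, Set.mem_preimage, Set.mem_inter_iff, Set.mem_setOf_eq, hΦmk,
          mk_mem_US_iff]
        tauto
      rw [hpre]
      apply ContinuousOn.isOpen_inter_preimage _ _ hVopen
      · -- continuity of invA on the set where the second coordinate is nonzero
        apply ContinuousOn.div
        · apply Continuous.continuousOn
          exact ((continuous_fst.comp continuous_subtype_val).pow q).mul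
            ((Complex.continuous_conj.comp (continuous_snd.comp continuous_subtype_val)).pow p)
        · apply Continuous.continuousOn
          exact (Complex.continuous_ofReal.comp
            (continuous_norm.comp (continuous_snd.comp continuous_subtype_val))).pow p
        · intro x hx
          exact pow_ne_zero p (Complex.ofReal_ne_zero.mpr
            (norm_ne_zero_iff.mpr hx))
      · exact (isOpen_ne_fun (continuous_snd.comp continuous_subtype_val) continuous_const)
    have hkey : E.symm ⁻¹' U = Subtype.val ⁻¹' O := by
      ext o
      obtain ⟨zc, hzc⟩ := Quot.exists_rep (E.symm o)
      have ho : o = F zc := by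
        conv_lhs => rw [← E.apply_symm_apply o, ← hzc]
        exact hTmk zc
      have hval : Φ (o : Quot (orbitRel p q)) = (zc : ℂ) ^ q := by
        rw [ho]; exact (hΦmk (fmap p q hp hq zc)).trans (invA_fmap hp hq zc)
      simp only [Set.mem_preimage, hO, Set.mem_inter_iff]
      constructor
      · intro hmem
        refine ⟨?_, o.2⟩
        rw [hval, hV]
        exact ⟨(zc : ℂ), ⟨zc, by simpa only [Set.mem_preimage, hzc] using hmem, rfl⟩, rfl⟩
      · rintro ⟨hmem, -⟩
        rw [hval, hV] at hmem
        obtain ⟨y, ⟨yb, hyU, hyval⟩, hypow⟩ := hmem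
        obtain ⟨k, hk⟩ := pow_eq_pow_rel q hq (zc : ℂ) y hypow.symm
        have : Quot.mk (ballRel q) yb = Quot.mk (ballRel q) zc := by
          apply Quot.sound
          exact ⟨k, by rw [hk, hyval]⟩
        rw [← hzc, ← this]
        exact hyU
    rw [hkey]
    exact hOopen.preimage continuous_subtype_val
  refine ⟨⟨E, hTcont, hEsymmCont⟩, ?_⟩
  intro z hz x hx
  show (T (Quot.mk (ballRel q) ⟨z, hz⟩) : Quot (orbitRel p q)) = Quot.mk (orbitRel p q) x
  rw [hTmk]
  show Quot.mk (orbitRel p q) (fmap p q hp hq ⟨z, hz⟩) = Quot.mk (orbitRel p q) x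
  congr 1
  exact Subtype.ext (by rw [hx]; rfl)
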